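/- Let P = (P, ≤, ', 0, 1) be a bounded poset of finite height with a complementation satisfying x'' = x which is weakly orthomodular (x ≤ y implies x ∨ (y ∧ x') exists and equals y). Define x ⊙ y := Min U(x, y') ∧ y (well-defined) and assume x → y := x' ∨ Max L(x, y) is well-defined. Then x ⊙ y ⊑ {z} implies {x} ⊑ y → z, and moreover x ∨ (x → 0) = {1} and x → 0 = {x'} for all x. -/

import Mathlib

/-- Common upper bounds of two elements. -/
def UB {P : Type*} [PartialOrder P] (a b : P) : Set P := {u | a ≤ u ∧ b ≤ u}

/-- Common lower bounds of two elements. -/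
def LB {P : Type*} [PartialOrder P] (a b : P) : Set P := {l | l ≤ a ∧ l ≤ b}

/-- Minimal elements of the set of common upper bounds. -/
def MinU {P : Type*} [PartialOrder P] (a b : P) : Set P :=
  {m | m ∈ UB a b ∧ ∀ x ∈ UB a b, x ≤ m → x = m}

/-- Maximal elements of the set of common lower bounds. -/
def MaxL {P : Type*} [PartialOrder P] (a b : P) : Set P :=
  {m | m ∈ LB a b ∧ ∀ x ∈ LB a b, m ≤ x → x = m}

/-- A poset has finite height if it contains no infinite chain. -/
def FinHeight (P : Type*) [Preorder P] : Prop :=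
  ∀ C : Set P, IsChain (· ≤ ·) C → C.Finite

/-- x ⊙ y := Min U(x, y') ∧ y, elementwise (w is a witness of an existing meet). -/
def odot {P : Type*} [PartialOrder P] (c : P → P) (x y : P) : Set P :=
  {w | ∃ m ∈ MinU x (c y), IsGLB {m, y} w}

/-- x → y := x' ∨ Max L(x, y), elementwise (w is a witness of an existing join). -/
def opImp {P : Type*} [PartialOrder P] (c : P → P) (x y : P) : Set P :=
  {w | ∃ m ∈ MaxL x y, IsLUB {c x, m} w}

/-- The order-like relation ⊑ on subsets. -/
def SubLE {P : Type*} [PartialOrder P] (A B : Set P) : Prop :=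
  ∃ a ∈ A, ∃ b ∈ B, a ≤ b

/-- A ⊙ y := ⋃ x ∈ A, x ⊙ y. -/
def setOdot {P : Type*} [PartialOrder P] (c : P → P) (A : Set P) (y : P) : Set P :=
  ⋃ x ∈ A, odot c x y

private lemma fin_exists_max {P : Type*} [PartialOrder P] (hfin : FinHeight P)
    (S : Set P) (a : P) (ha : a ∈ S) :
    ∃ m ∈ S, a ≤ m ∧ ∀ z ∈ S, m ≤ z → z = m := by
  obtain ⟨m, ham, hmax⟩ := zorn_le_nonempty₀ S (fun cc hcS hc y hy => by
    have hfinc : cc.Finite := hfin cc hc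
    obtain ⟨ub, hub, hm⟩ := Set.Finite.exists_maximalFor id cc hfinc ⟨y, hy⟩
    refine ⟨ub, hcS hub, fun z hz => ?_⟩
    rcases eq_or_ne z ub with rfl | hne
    · exact le_rfl
    rcases hc hz hub hne with h | h
    · exact h
    · exact hm hz h) a ha
  exact ⟨m, hmax.1, ham, fun z hz h => le_antisymm (hmax.2 hz h) h⟩

private lemma fin_exists_min {P : Type*} [PartialOrder P] (hfin : FinHeight P)
    (S : Set P) (a : P) (ha : a ∈ S) :
    ∃ m ∈ S, m ≤ a ∧ ∀ z ∈ S, z ≤ m → z = m := by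
  have hfin' : FinHeight Pᵒᵈ := by
    intro C hC
    have : IsChain (· ≤ ·) (OrderDual.ofDual '' C) := by
      rintro x ⟨x', hx', rfl⟩ y ⟨y', hy', rfl⟩ hne
      rcases hC hx' hy' (by simpa using hne) with h | h
      · exact Or.inr h
      · exact Or.inl h
    have := hfin _ this
    exact (Set.Finite.image OrderDual.toDual this).subset (by
      rintro x hx; exact ⟨OrderDual.ofDual x, ⟨x, hx, rfl⟩, rfl⟩)
  obtain ⟨m, hm, ham, hmax⟩ :=
    fin_exists_max (P := Pᵒᵈ) hfin' S a ha
  exact ⟨m, hm, ham, hmax⟩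

private lemma lub_pair_left {P : Type*} [PartialOrder P] {a b : P} (h : b ≤ a) :
    IsLUB {a, b} a := by
  constructor
  · rintro x (rfl | rfl) <;> simp [h]
  · intro u hu; exact hu (Set.mem_insert _ _)

theorem stmt18 {P : Type*} [PartialOrder P] [BoundedOrder P] (c : P → P)
    (hinv : ∀ x : P, c (c x) = x)
    (hinf : ∀ x : P, IsGLB {x, c x} ⊥)
    (hsup : ∀ x : P, IsLUB {x, c x} ⊤)
    (hWOM : ∀ x y : P, x ≤ y → ∃ m, IsGLB {y, c x} m ∧ IsLUB {x, m} y)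
    (hfin : FinHeight P)
    (himp : ∀ x y : P, ∀ m ∈ MaxL x y, ∃ j, IsLUB {c x, m} j) :
    (∀ x y : P, (odot c x y).Nonempty) ∧
    (∀ x y z : P, SubLE (odot c x y) {z} → SubLE {x} (opImp c y z)) ∧
    (∀ x : P, {w | ∃ a ∈ opImp c x ⊥, IsLUB {x, a} w} = {(⊤ : P)}) ∧
    (∀ x : P, opImp c x ⊥ = {c x}) := by
  have h4 : ∀ x : P, opImp c x ⊥ = {c x} := by
    intro x
    ext w
    simp only [opImp, Set.mem_setOf_eq, Set.mem_singleton_iff]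
    constructor
    · rintro ⟨m, ⟨⟨hm1, hm2⟩, -⟩, hlub⟩
      have hm : m = ⊥ := le_bot_iff.mp hm2
      subst hm
      exact hlub.unique (lub_pair_left bot_le)
    · rintro rfl
      refine ⟨⊥, ⟨⟨bot_le, le_rfl⟩, fun z hz _ => le_bot_iff.mp hz.2⟩, lub_pair_left bot_le⟩
  refine ⟨?_, ?_, ?_, h4⟩
  · -- odot nonempty
    intro x y
    obtain ⟨m, hmU, -, hmin⟩ := fin_exists_min hfin (UB x (c y)) ⊤ ⟨le_top, le_top⟩
    have hcy : c y ≤ m := hmU.2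
    obtain ⟨g, hg, -⟩ := hWOM (c y) m hcy
    rw [hinv] at hg
    exact ⟨g, m, ⟨hmU, hmin⟩, hg⟩
  · -- odot ≤ z implies x ≤ imp
    rintro x y z ⟨a, ⟨m, ⟨hmU, hmin⟩, hglb⟩, b, hb, hab⟩
    have haz : a ≤ z := le_of_le_of_eq hab (Set.eq_of_mem_singleton hb)
    have hay : a ≤ y := hglb.1 (Set.mem_insert_of_mem _ rfl)
    obtain ⟨n, hnL, han, hnmax⟩ := fin_exists_max hfin (LB y z) a ⟨hay, haz⟩
    have hnMaxL : n ∈ MaxL y z := ⟨hnL, hnmax⟩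
    obtain ⟨j, hj⟩ := himp y z n hnMaxL
    -- m = c y ∨ a via WOM and GLB uniqueness
    obtain ⟨g, hg, hlub⟩ := hWOM (c y) m hmU.2
    rw [hinv] at hg
    have hga : g = a := hg.unique hglb
    subst hga
    have hmj : m ≤ j := hlub.2 (by
      rintro u (rfl | rfl)
      · exact hj.1 (Set.mem_insert _ _)
      · exact le_trans han (hj.1 (Set.mem_insert_of_mem _ rfl)))
    exact ⟨x, rfl, j, ⟨n, hnMaxL, hj⟩, le_trans hmU.1 hmj⟩
  · -- x ∨ (x → 0) = {⊤}
    intro x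
    ext w
    simp only [Set.mem_setOf_eq, Set.mem_singleton_iff, h4]
    constructor
    · rintro ⟨a, rfl, hlub⟩
      exact hlub.unique (hsup x)
    · rintro rfl
      exact ⟨c x, rfl, hsup x⟩
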